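/- Let X be a compact Hausdorff space, ∗ a continuous t-norm, and ν an upper-semicontinuous normed capacity on X. Define the t-normed integral I(φ) = max{ν(φ⁻¹([t,1])) ∗ t : t ∈ [0,1]} for φ ∈ C(X,[0,1]). Then I satisfies: (1) I(1_X) = 1; (2) I(φ ∨ ψ) = I(φ) ∨ I(ψ) for all comonotone φ, ψ; (3) I(c ∗ φ) = c ∗ I(φ) for every c ∈ [0,1] and φ ∈ C(X,[0,1]), where (c ∗ φ)(x) = c ∗ φ(x). -/

import Mathlib

open unitInterval

noncomputable section

/-- Two `[0,1]`-valued functions are comonotone. -/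
def Comonotone {X : Type*} (f g : X → I) : Prop :=
  ∀ x y : X, 0 ≤ ((f x : ℝ) - (f y : ℝ)) * ((g x : ℝ) - (g y : ℝ))
/-- Pointwise max of a constant with a continuous `[0,1]`-valued map. -/
def cSup {X : Type*} [TopologicalSpace X] (c : I) (f : C(X, I)) : C(X, I) :=
  ⟨fun x => c ⊔ f x, continuous_const.max f.continuous⟩

/-- Pointwise min of a constant with a continuous `[0,1]`-valued map. -/
def cInf {X : Type*} [TopologicalSpace X] (c : I) (f : C(X, I)) : C(X, I) :=
  ⟨fun x => c ⊓ f x, continuous_const.min f.continuous⟩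

/-- Pointwise product of a constant with a continuous `[0,1]`-valued map. -/
def cMul {X : Type*} [TopologicalSpace X] (c : I) (f : C(X, I)) : C(X, I) :=
  ⟨fun x => c * f x,
    Continuous.subtype_mk (continuous_const.mul (continuous_subtype_val.comp f.continuous)) _⟩

/-- Pointwise max of two continuous `[0,1]`-valued maps. -/
def fSup {X : Type*} [TopologicalSpace X] (f g : C(X, I)) : C(X, I) :=
  ⟨fun x => f x ⊔ g x, f.continuous.max g.continuous⟩
/-- A continuous t-norm on `[0,1]`. -/
structure Tnorm where
  op : I → I → I
  cont : Continuous fun p : I × I => op p.1 p.2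
  assoc : ∀ a b c, op (op a b) c = op a (op b c)
  comm : ∀ a b, op a b = op b a
  mono : ∀ ⦃a b c d⦄, a ≤ b → c ≤ d → op a c ≤ op b d
  op_one : ∀ s, op s 1 = s
/-- The map `x ↦ c ∗ f x` for a t-norm `∗`. -/
def tMul {X : Type*} [TopologicalSpace X] (T : Tnorm) (c : I) (f : C(X, I)) : C(X, I) :=
  ⟨fun x => T.op c (f x), T.cont.comp (continuous_const.prodMk f.continuous)⟩
/-- An upper-semicontinuous normed capacity on a topological space,
defined on the closed subsets. -/
structure Capacity (X : Type*) [TopologicalSpace X] where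
  ν : {F : Set X // IsClosed F} → I
  normed : ν ⟨Set.univ, isClosed_univ⟩ = 1
  empty : ν ⟨∅, isClosed_empty⟩ = 0
  mono : ∀ F G : {F : Set X // IsClosed F}, F.1 ⊆ G.1 → ν F ≤ ν G
  usc : ∀ (F : {F : Set X // IsClosed F}) (a : I), ν F < a →
    ∃ O : Set X, IsOpen O ∧ F.1 ⊆ O ∧
      ∀ B : {F : Set X // IsClosed F}, IsCompact B.1 → B.1 ⊆ O → ν B < a

/-- The (closed) superlevel set `φ⁻¹([t,1])` of a continuous `[0,1]`-valued map. -/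
def superLevel {X : Type*} [TopologicalSpace X] (f : C(X, I)) (t : I) :
    {F : Set X // IsClosed F} :=
  ⟨{x | t ≤ f x}, isClosed_le continuous_const f.continuous⟩


lemma Tnorm.op_zero (T : Tnorm) (a : I) : T.op a 0 = 0 := by
  apply le_antisymm
  · calc T.op a 0 ≤ T.op 1 0 := T.mono (le_one' : a ≤ 1) le_rfl
    _ = 0 := by rw [T.comm, T.op_one]
  · exact bot_le.trans_eq rfl

lemma Tnorm.left_comm (T : Tnorm) (a b c : I) :
    T.op a (T.op b c) = T.op b (T.op a c) := by
  rw [← T.assoc, T.comm a b, T.assoc]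

lemma Tnorm.one_op (T : Tnorm) (a : I) : T.op 1 a = a := by
  rw [T.comm, T.op_one]

/-- The t-normed integral `I(φ) = max{ν(φ_t) ∗ t : t ∈ [0,1]}` with respect to a capacity
is normed, preserves `∨` on comonotone functions, and is `∗`-homogeneous. -/
theorem tnormed_integral_properties {X : Type*} [TopologicalSpace X] [CompactSpace X]
    [T2Space X] (T : Tnorm) (ν : Capacity X) (J : C(X, I) → I)
    (hJ : ∀ φ : C(X, I), IsGreatest {y | ∃ t : I, y = T.op (ν.ν (superLevel φ t)) t} (J φ)) :
    J (ContinuousMap.const X 1) = 1 ∧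
    (∀ φ ψ : C(X, I), Comonotone (⇑φ) (⇑ψ) → J (fSup φ ψ) = J φ ⊔ J ψ) ∧
    (∀ (c : I) (φ : C(X, I)), J (tMul T c φ) = T.op c (J φ)) := by
  have hmem : ∀ (φ : C(X, I)) (t : I), T.op (ν.ν (superLevel φ t)) t ≤ J φ :=
    fun φ t => (hJ φ).2 ⟨t, rfl⟩
  refine ⟨?_, ?_, ?_⟩
  · -- normed
    apply le_antisymm le_top
    have h1 : (1 : I) ∈ {y | ∃ t : I, y = T.op (ν.ν (superLevel (ContinuousMap.const X 1) t)) t} := by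
      refine ⟨1, ?_⟩
      have : superLevel (ContinuousMap.const X 1) 1 = ⟨Set.univ, isClosed_univ⟩ := by
        apply Subtype.ext
        simp [superLevel, Set.eq_univ_iff_forall]
      rw [this, ν.normed, T.op_one]
    exact (hJ _).2 h1
  have hsub2 : ∀ (φ ψ χ : C(X, I)) {t : I}, (∀ x, χ x ≤ φ x ⊔ ψ x) →
      (superLevel χ t).1 ⊆ (superLevel (fSup φ ψ) t).1 := by
    intro φ ψ χ t hχ x hx
    simp only [superLevel, fSup, Set.mem_setOf_eq, ContinuousMap.coe_mk] at hx ⊢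
    exact le_trans hx (hχ x)
  · -- comonotone sup
    intro φ ψ hc
    apply le_antisymm
    · -- every element of the set for fSup is ≤ J φ ⊔ J ψ
      obtain ⟨t, ht⟩ := (hJ (fSup φ ψ)).1
      rw [ht]
      -- dichotomy
      have key : (superLevel φ t).1 ⊆ (superLevel ψ t).1 ∨
          (superLevel ψ t).1 ⊆ (superLevel φ t).1 := by
        by_contra h
        push_neg at h
        obtain ⟨h1, h2⟩ := h
        obtain ⟨x, hx1, hx2⟩ := Set.not_subset.mp h1
        obtain ⟨y, hy1, hy2⟩ := Set.not_subset.mp h2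
        simp only [superLevel, Set.mem_setOf_eq] at hx1 hx2 hy1 hy2
        push_neg at hx2 hy2
        have h1 : (φ y : ℝ) < (t : ℝ) := hy2
        have h2 : (t : ℝ) ≤ (φ x : ℝ) := hx1
        have h3 : (ψ x : ℝ) < (t : ℝ) := hx2
        have h4 : (t : ℝ) ≤ (ψ y : ℝ) := hy1
        have := hc x y
        nlinarith
      have hsub : ∀ χ : C(X, I), (∀ x, χ x ≤ φ x ⊔ ψ x) → (superLevel χ t).1 ⊆ (superLevel (fSup φ ψ) t).1 := by
        intro χ hχ x hx
        simp only [superLevel, fSup, Set.mem_setOf_eq, ContinuousMap.coe_mk] at hx ⊢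
        exact le_trans hx (hχ x)
      rcases key with h | h
      · have heq : (superLevel (fSup φ ψ) t).1 = (superLevel ψ t).1 := by
          apply Set.Subset.antisymm
          · intro x hx
            simp only [superLevel, fSup, Set.mem_setOf_eq, le_sup_iff,
              ContinuousMap.coe_mk] at hx ⊢
            rcases hx with hx | hx
            · exact h hx
            · exact hx
          · exact hsub ψ (fun x => le_sup_right)
        have : ν.ν (superLevel (fSup φ ψ) t) = ν.ν (superLevel ψ t) :=
          le_antisymm (ν.mono _ _ heq.le) (ν.mono _ _ heq.ge)
        rw [this]
        exact le_sup_of_le_right (hmem ψ t)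
      · have heq : (superLevel (fSup φ ψ) t).1 = (superLevel φ t).1 := by
          apply Set.Subset.antisymm
          · intro x hx
            simp only [superLevel, fSup, Set.mem_setOf_eq, le_sup_iff,
              ContinuousMap.coe_mk] at hx ⊢
            rcases hx with hx | hx
            · exact hx
            · exact h hx
          · exact hsub φ (fun x => le_sup_left)
        have : ν.ν (superLevel (fSup φ ψ) t) = ν.ν (superLevel φ t) :=
          le_antisymm (ν.mono _ _ heq.le) (ν.mono _ _ heq.ge)
        rw [this]
        exact le_sup_of_le_left (hmem φ t)
    · apply sup_le
      · obtain ⟨t, ht⟩ := (hJ φ).1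
        rw [ht]
        calc T.op (ν.ν (superLevel φ t)) t
            ≤ T.op (ν.ν (superLevel (fSup φ ψ) t)) t :=
              T.mono (ν.mono _ _ (hsub2 φ ψ φ (fun x => le_sup_left))) le_rfl
          _ ≤ J (fSup φ ψ) := hmem _ t
      · obtain ⟨t, ht⟩ := (hJ ψ).1
        rw [ht]
        calc T.op (ν.ν (superLevel ψ t)) t
            ≤ T.op (ν.ν (superLevel (fSup φ ψ) t)) t :=
              T.mono (ν.mono _ _ (hsub2 φ ψ ψ (fun x => le_sup_right))) le_rfl
          _ ≤ J (fSup φ ψ) := hmem _ t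
  · -- homogeneity
    intro c φ
    apply le_antisymm
    · obtain ⟨s, hs⟩ := (hJ (tMul T c φ)).1
      rw [hs]
      set S : Set I := {t | s ≤ T.op c t} with hS
      by_cases hne : S.Nonempty
      · have hScl : IsClosed S :=
          isClosed_le continuous_const (T.cont.comp (continuous_const.prodMk continuous_id))
        obtain ⟨t₀, ht₀S, ht₀least⟩ := (hScl.isCompact).exists_isLeast hne
        have hsub : (superLevel (tMul T c φ) s).1 ⊆ (superLevel φ t₀).1 := by
          intro x hx
          exact ht₀least hx
        calc T.op (ν.ν (superLevel (tMul T c φ) s)) s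
            ≤ T.op (ν.ν (superLevel φ t₀)) (T.op c t₀) := T.mono (ν.mono _ _ hsub) ht₀S
          _ = T.op c (T.op (ν.ν (superLevel φ t₀)) t₀) := T.left_comm _ _ _
          _ ≤ T.op c (J φ) := T.mono le_rfl (hmem φ t₀)
      · have hempty : (superLevel (tMul T c φ) s).1 = (∅ : Set X) := by
          apply Set.eq_empty_iff_forall_notMem.mpr
          intro x hx
          exact hne ⟨φ x, hx⟩
        have : ν.ν (superLevel (tMul T c φ) s) = 0 := by
          apply le_antisymm _ (by exact bot_le)
          rw [← ν.empty]
          exact ν.mono _ _ hempty.le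
        rw [this, T.comm, T.op_zero]
        exact bot_le
    · obtain ⟨t, ht⟩ := (hJ φ).1
      rw [ht]
      have hsub : (superLevel φ t).1 ⊆ (superLevel (tMul T c φ) (T.op c t)).1 :=
        fun x hx => T.mono le_rfl hx
      calc T.op c (T.op (ν.ν (superLevel φ t)) t)
          = T.op (ν.ν (superLevel φ t)) (T.op c t) := T.left_comm _ _ _
        _ ≤ T.op (ν.ν (superLevel (tMul T c φ) (T.op c t))) (T.op c t) :=
            T.mono (ν.mono _ _ hsub) le_rfl
        _ ≤ J (tMul T c φ) := hmem _ _
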